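/- For κ = 15, with ⟨x⟩ = sin(πx/15)/sin(π/15) for real x, the following identities hold: ⟨1⟩·⟨3⟩ / (⟨1/2⟩·⟨3/2⟩) = (√5 + √(15 + 6√5))/2 and ⟨5/2⟩·⟨3⟩ / (⟨1⟩·⟨3/2⟩) = (5 + 3√5 + √(6(5+√5)))/4. -/

import Mathlib

open Real

/-- The q-number at altitude `κ`: `⟨x⟩ = sin(πx/κ)/sin(π/κ)`. -/
noncomputable def qnum (κ x : ℝ) : ℝ := Real.sin (Real.pi * x / κ) / Real.sin (Real.pi / κ)

lemma s5_sq : Real.sqrt 5 ^ 2 = 5 := Real.sq_sqrt (by norm_num)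
lemma s5_nonneg : (0:ℝ) ≤ Real.sqrt 5 := Real.sqrt_nonneg 5
lemma s5_gt : (1:ℝ) < Real.sqrt 5 := by nlinarith [s5_sq, s5_nonneg]

lemma cos_2pi5 : Real.cos (2*π/5) = (Real.sqrt 5 - 1)/4 := by
  rw [show (2:ℝ)*π/5 = 2*(π/5) by ring, Real.cos_two_mul, Real.cos_pi_div_five]
  linear_combination s5_sq/8

lemma sin_2pi5 : Real.sin (2*π/5) = Real.sqrt (10 + 2*Real.sqrt 5) / 4 := by
  have h0 : (0:ℝ) ≤ 2*π/5 := by positivity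
  have h1 : 2*π/5 ≤ π := by nlinarith [pi_pos]
  rw [Real.sin_eq_sqrt_one_sub_cos_sq h0 h1, cos_2pi5,
    show (1:ℝ) - ((Real.sqrt 5-1)/4)^2 = (10+2*Real.sqrt 5)*(1/4)^2 by linear_combination -s5_sq/16,
    Real.sqrt_mul (by positivity), Real.sqrt_sq (by norm_num)]; ring

lemma cos_pi15 : Real.cos (π/15) = (Real.sqrt (30+6*Real.sqrt 5) + Real.sqrt 5 - 1)/8 := by
  rw [show π/15 = 2*π/5 - π/3 by ring, Real.cos_sub, cos_2pi5, sin_2pi5,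
    Real.cos_pi_div_three, Real.sin_pi_div_three]
  have h3 : Real.sqrt (10+2*Real.sqrt 5) * Real.sqrt 3 = Real.sqrt (30+6*Real.sqrt 5) := by
    rw [← Real.sqrt_mul (by positivity)]; ring_nf
  linear_combination h3/8

lemma s1_sq : Real.sqrt (30+6*Real.sqrt 5) ^ 2 = 30+6*Real.sqrt 5 :=
  Real.sq_sqrt (by positivity)

lemma key : Real.sqrt (30+6*Real.sqrt 5) * (Real.sqrt 5 + 1) = 4 * Real.sqrt (15+6*Real.sqrt 5) := by
  have h : (30+6*Real.sqrt 5) * (Real.sqrt 5+1)^2 = 4^2 * (15+6*Real.sqrt 5) := by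
    linear_combination (6*Real.sqrt 5 + 42) * s5_sq
  calc Real.sqrt (30+6*Real.sqrt 5) * (Real.sqrt 5+1)
      = Real.sqrt ((30+6*Real.sqrt 5) * (Real.sqrt 5+1)^2) := by
        rw [Real.sqrt_mul (by positivity), Real.sqrt_sq (by positivity)]
    _ = Real.sqrt (4^2 * (15+6*Real.sqrt 5)) := by rw [h]
    _ = 4 * Real.sqrt (15+6*Real.sqrt 5) := by
        rw [Real.sqrt_mul (by norm_num), Real.sqrt_sq (by norm_num)]

lemma sin_pi10 : Real.sin (π/10) = (Real.sqrt 5 - 1)/4 := by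
  rw [show π/10 = π/2 - 2*π/5 by ring, Real.sin_pi_div_two_sub, cos_2pi5]

lemma r1 : Real.sin (π/15) * Real.sin (π/5) / (Real.sin (π/30) * Real.sin (π/10))
    = (Real.sqrt 5 + Real.sqrt (15 + 6 * Real.sqrt 5)) / 2 := by
  have hs30 : 0 < Real.sin (π/30) := Real.sin_pos_of_pos_of_lt_pi (by positivity) (by nlinarith [pi_pos])
  have hs10 : 0 < Real.sin (π/10) := Real.sin_pos_of_pos_of_lt_pi (by positivity) (by nlinarith [pi_pos])
  have e15 : Real.sin (π/15) = 2 * Real.sin (π/30) * Real.cos (π/30) := by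
    rw [show π/15 = 2*(π/30) by ring, Real.sin_two_mul]
  have e5 : Real.sin (π/5) = 2 * Real.sin (π/10) * Real.cos (π/10) := by
    rw [show π/5 = 2*(π/10) by ring, Real.sin_two_mul]
  rw [e15, e5, show (2 * Real.sin (π/30) * Real.cos (π/30)) * (2 * Real.sin (π/10) * Real.cos (π/10))
      / (Real.sin (π/30) * Real.sin (π/10)) = 4 * (Real.cos (π/10) * Real.cos (π/30)) by
    field_simp; ring]
  have h1 : 2 * Real.cos (π/15)^2 - 1 = Real.cos (π/10) * Real.cos (π/30) - Real.sin (π/10) * Real.sin (π/30) := by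
    rw [← Real.cos_add, ← Real.cos_two_mul, show π/10 + π/30 = 2*(π/15) by ring]
  have h2 : Real.cos (π/15) = Real.cos (π/10) * Real.cos (π/30) + Real.sin (π/10) * Real.sin (π/30) := by
    rw [← Real.cos_sub, show π/10 - π/30 = π/15 by ring]
  rw [cos_pi15] at h1 h2
  linear_combination -2*h1 - 2*h2 + (1/16)*s1_sq + (1/16)*s5_sq + (1/8)*key

lemma r2 : Real.sin (π/6) * Real.sin (π/5) / (Real.sin (π/15) * Real.sin (π/10))
    = (5 + 3 * Real.sqrt 5 + Real.sqrt (6 * (5 + Real.sqrt 5))) / 4 := by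
  have hs15 : 0 < Real.sin (π/15) := Real.sin_pos_of_pos_of_lt_pi (by positivity) (by nlinarith [pi_pos])
  have e5 : Real.sin (π/5) = 3 * Real.sin (π/15) - 4 * Real.sin (π/15)^3 := by
    rw [show π/5 = 3*(π/15) by ring, Real.sin_three_mul]
  have hsq : Real.sin (π/15)^2 = 1 - ((Real.sqrt (30+6*Real.sqrt 5) + Real.sqrt 5 - 1)/8)^2 := by
    have := Real.sin_sq_add_cos_sq (π/15)
    rw [cos_pi15] at this; linarith
  rw [show (6:ℝ) * (5 + Real.sqrt 5) = 30 + 6*Real.sqrt 5 by ring]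
  rw [Real.sin_pi_div_six, sin_pi10, e5]
  have h51 : Real.sqrt 5 - 1 ≠ 0 := by nlinarith [s5_gt]
  field_simp
  rw [show (30:ℝ) + Real.sqrt 5 * 6 = 30 + 6 * Real.sqrt 5 by ring]
  nlinarith [hsq, s1_sq, s5_sq, hs15]

/-- Quantum dimensions of the two fundamental representations of B2 at level 12
(altitude κ = 15): the spinorial `{0,1}` and the vectorial `{1,0}`. -/
theorem b2_level12_fundamental_qdims :
    qnum 15 1 * qnum 15 3 / (qnum 15 (1/2) * qnum 15 (3/2))
      = (Real.sqrt 5 + Real.sqrt (15 + 6 * Real.sqrt 5)) / 2 ∧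
    qnum 15 (5/2) * qnum 15 3 / (qnum 15 1 * qnum 15 (3/2))
      = (5 + 3 * Real.sqrt 5 + Real.sqrt (6 * (5 + Real.sqrt 5))) / 4 := by
  have hs15 : 0 < Real.sin (π/15) := Real.sin_pos_of_pos_of_lt_pi (by positivity) (by nlinarith [pi_pos])
  have hs30 : 0 < Real.sin (π/30) := Real.sin_pos_of_pos_of_lt_pi (by positivity) (by nlinarith [pi_pos])
  have hs10 : 0 < Real.sin (π/10) := Real.sin_pos_of_pos_of_lt_pi (by positivity) (by nlinarith [pi_pos])
  have hs5 : 0 < Real.sin (π/5) := Real.sin_pos_of_pos_of_lt_pi (by positivity) (by nlinarith [pi_pos])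
  have hs6 : 0 < Real.sin (π/6) := Real.sin_pos_of_pos_of_lt_pi (by positivity) (by nlinarith [pi_pos])
  unfold qnum
  rw [show π * 1 / 15 = π/15 by ring, show π * 3 / 15 = π/5 by ring,
    show π * (1/2) / 15 = π/30 by ring, show π * (3/2) / 15 = π/10 by ring,
    show π * (5/2) / 15 = π/6 by ring]
  constructor
  · rw [← r1]; field_simp
  · rw [← r2]; field_simp
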